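/- arXiv:cs/0405085 — 2 statements merged into one kernel-verified Lean document; each statement's English description precedes it below -/
import Mathlib

section
/- Let f be a first-order monotone boolean function of arity k+1, fix an index i ∈ {1,…,k+1} and a value y ∈ 𝔹, and define the first-order monotone boolean function f' of arity k by f'(x₁,…,x_k) = f(x₁,…,x_{i−1}, y, x_i,…,x_k). Then cc(f') ≥ cc(f) in ℕ∞. -/
/-- The flat boolean domain: `⊥`, `tt`, `ff`. -/
abbrev Bb : Type := WithBot Bool

/-- The flat (domain) order on `Bb`: `⊥` below everything, `tt` and `ff` incomparable. -/
def bLE (a b : Bb) : Prop := a = ⊥ ∨ a = b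

/-- Pointwise flat order on tuples. -/
def tupLE {k : ℕ} (x y : Fin k → Bb) : Prop := ∀ i, bLE (x i) (y i)

/-- Strict pointwise flat order on tuples. -/
def tupLT {k : ℕ} (x y : Fin k → Bb) : Prop := tupLE x y ∧ x ≠ y

/-- A first-order boolean function is monotone for the flat order. -/
def FlatMono {k : ℕ} (f : (Fin k → Bb) → Bb) : Prop :=
  ∀ x y, tupLE x y → bLE (f x) (f y)

/-- The presequentiality relation `P^n_{A,B}` (indices `0,…,n-1`). -/
def Preseq (n : ℕ) (A B : Finset ℕ) : Set (Fin n → Bb) :=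
  {d | (∃ i : Fin n, (i : ℕ) ∈ A ∧ d i = ⊥) ∨
       (∀ i j : Fin n, (i : ℕ) ∈ B → (j : ℕ) ∈ B → d i = d j)}

/-- `P^n_{m,m'}`: the presequentiality relation on initial segments. -/
def PreseqSeg (n m m' : ℕ) : Set (Fin n → Bb) :=
  Preseq n (Finset.range m) (Finset.range m')

/-- `f` (arity `k`) is invariant under an `n`-ary relation `R`. -/
def Invariant {k n : ℕ} (f : (Fin k → Bb) → Bb) (R : Set (Fin n → Bb)) : Prop :=
  ∀ x : Fin k → Fin n → Bb, (∀ m, x m ∈ R) →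
    (fun i => f (fun m => x m i)) ∈ R

/-- `π₁(tr f)`: the set of minimal points where `f` is defined. -/
def traceDom {k : ℕ} (f : (Fin k → Bb) → Bb) : Set (Fin k → Bb) :=
  {v | f v ≠ ⊥ ∧ ∀ v', tupLT v' v → f v' = ⊥}

/-- Linear coherence of a set of tuples. -/
def LinCoherent {k : ℕ} (S : Set (Fin k → Bb)) : Prop :=
  ∀ j : Fin k, (∀ v ∈ S, v j ≠ ⊥) → ∀ v ∈ S, ∀ w ∈ S, v j = w j

/-- The coefficient of coherence `cc(f) ∈ ℕ∞`. -/
noncomputable def cc {k : ℕ} (f : (Fin k → Bb) → Bb) : ℕ∞ :=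
  sInf {c : ℕ∞ | ∃ S : Finset (Fin k → Bb),
    ↑S ⊆ traceDom f ∧ 2 ≤ S.card ∧ LinCoherent (↑S : Set (Fin k → Bb)) ∧ c = (S.card : ℕ∞)}

/-- The bivalued coefficient of coherence `bcc(f) ∈ ℕ∞`. -/
noncomputable def bcc {k : ℕ} (f : (Fin k → Bb) → Bb) : ℕ∞ :=
  sInf {c : ℕ∞ | ∃ S : Finset (Fin k → Bb),
    ↑S ⊆ traceDom f ∧ 3 ≤ S.card ∧ LinCoherent (↑S : Set (Fin k → Bb)) ∧
    (∃ v ∈ S, f v = ((true : Bool) : Bb)) ∧ (∃ v ∈ S, f v = ((false : Bool) : Bb)) ∧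
    c = (S.card : ℕ∞)}

/-- M-sequentiality, by induction on the arity. -/
def MSeq : ∀ {k : ℕ}, ((Fin k → Bb) → Bb) → Prop
  | 0, f => ∃ b, ∀ x, f x = b
  | (k+1), f => (∃ b, ∀ x, f x = b) ∨
      ∃ i : Fin (k+1), (∀ x, x i = ⊥ → f x = ⊥) ∧
        ∀ c : Bool, MSeq (fun x : Fin k → Bb => f (i.insertNth (c : Bb) x))

lemma bLE_refl (a : Bb) : bLE a a := Or.inr rfl

lemma bLE_trans {a b c : Bb} (h1 : bLE a b) (h2 : bLE b c) : bLE a c := by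
  rcases h1 with h1 | h1
  · exact Or.inl h1
  · rcases h2 with h2 | h2
    · exact Or.inl (h1 ▸ h2)
    · exact Or.inr (h1 ▸ h2)

lemma tupLE_trans {k : ℕ} {x y z : Fin k → Bb} (h1 : tupLE x y) (h2 : tupLE y z) :
    tupLE x z := fun j => bLE_trans (h1 j) (h2 j)

/-- number of non-⊥ coordinates -/
def countNB {k : ℕ} (v : Fin k → Bb) : ℕ :=
  (Finset.univ.filter fun j => v j ≠ ⊥).card

lemma countNB_lt {k : ℕ} {u v : Fin k → Bb} (h : tupLT u v) : countNB u < countNB v := by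
  apply Finset.card_lt_card
  constructor
  · intro j hj
    simp only [Finset.mem_filter, Finset.mem_univ, true_and] at hj ⊢
    rcases h.1 j with hb | hb
    · exact absurd hb hj
    · rw [← hb]; exact hj
  · intro hsub
    apply h.2
    funext j
    rcases h.1 j with hb | hb
    · by_contra hne
      have hv : v j ≠ ⊥ := fun hv => hne (hb.trans hv.symm)
      have hu : u j ≠ ⊥ := by
        have := hsub (by simp [hv] : j ∈ Finset.univ.filter fun j => v j ≠ ⊥)
        simpa using this
      exact hu hb
    · exact hb

lemma exists_min {k : ℕ} (f : (Fin k → Bb) → Bb) :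
    ∀ n (v : Fin k → Bb), countNB v = n → f v ≠ ⊥ →
      ∃ w, tupLE w v ∧ w ∈ traceDom f := by
  intro n
  induction n using Nat.strong_induction_on with
  | _ n ih =>
    intro v hn hv
    by_cases hmin : ∀ v', tupLT v' v → f v' = ⊥
    · exact ⟨v, fun j => bLE_refl _, hv, hmin⟩
    · push_neg at hmin
      obtain ⟨v', hlt, hv'⟩ := hmin
      obtain ⟨w, hw1, hw2⟩ := ih (countNB v') (hn ▸ countNB_lt hlt) v' rfl hv'
      exact ⟨w, tupLE_trans hw1 hlt.1, hw2⟩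

lemma key_min {k : ℕ} (f : (Fin (k + 1) → Bb) → Bb) (hf : FlatMono f) (i : Fin (k + 1))
    (y : Bb) (v : Fin k → Bb)
    (hv : v ∈ traceDom (fun x : Fin k → Bb => f (i.insertNth y x))) :
    ∃ a, bLE a y ∧ i.insertNth a v ∈ traceDom f := by
  obtain ⟨w, hw1, hw2⟩ := exists_min f (countNB (i.insertNth y v)) (i.insertNth y v) rfl hv.1
  set w' : Fin k → Bb := fun j => w (i.succAbove j) with hw'def
  have hle : tupLE w (i.insertNth y w') := by
    intro j
    rcases eq_or_ne j i with rfl | hj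
    · have := hw1 j
      rw [Fin.insertNth_apply_same] at this ⊢
      exact this
    · obtain ⟨j', rfl⟩ := Fin.exists_succAbove_eq hj
      rw [Fin.insertNth_apply_succAbove]
      exact bLE_refl _
  have hfw' : f (i.insertNth y w') ≠ ⊥ := by
    rcases hf _ _ hle with h | h
    · exact absurd h hw2.1
    · rw [← h]; exact hw2.1
  have hle' : tupLE w' v := by
    intro j
    have := hw1 (i.succAbove j)
    rwa [Fin.insertNth_apply_succAbove] at this
  have hweq : w' = v := by
    by_contra hne
    exact hfw' (hv.2 w' ⟨hle', hne⟩)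
  refine ⟨w i, ?_, ?_⟩
  · have := hw1 i
    rwa [Fin.insertNth_apply_same] at this
  · have heq : i.insertNth (w i) v = w := by
      funext j
      rcases eq_or_ne j i with rfl | hj
      · rw [Fin.insertNth_apply_same]
      · obtain ⟨j', rfl⟩ := Fin.exists_succAbove_eq hj
        rw [Fin.insertNth_apply_succAbove, ← hweq]
    rw [heq]; exact hw2

/-- fixing one argument of `f` cannot decrease the coefficient of
coherence. -/
theorem stmt_13 {k : ℕ} (f : (Fin (k + 1) → Bb) → Bb) (hf : FlatMono f)
    (i : Fin (k + 1)) (y : Bb) :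
    cc f ≤ cc (fun x : Fin k → Bb => f (i.insertNth y x)) := by
  apply sInf_le_sInf
  rintro c ⟨S, hS, hcard, hcoh, rfl⟩
  have hchoice : ∀ v : {x // x ∈ S}, ∃ a, bLE a y ∧ i.insertNth a (v.1 : Fin k → Bb) ∈ traceDom f :=
    fun v => key_min f hf i y v.1 (hS v.2)
  choose a ha1 ha2 using hchoice
  have hinj : Function.Injective (fun v : {x // x ∈ S} => (i.insertNth (a v) v.1 : Fin (k+1) → Bb)) := by
    intro u t h
    apply Subtype.ext
    funext j
    simpa [Fin.insertNth_apply_succAbove] using congrFun h (i.succAbove j)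
  refine ⟨S.attach.image (fun v => i.insertNth (a v) v.1), ?_, ?_, ?_, ?_⟩
  · intro x hx
    simp only [Finset.coe_image, Set.mem_image, Finset.mem_coe, Finset.mem_attach] at hx
    obtain ⟨v, _, rfl⟩ := hx
    exact ha2 v
  · rwa [Finset.card_image_of_injective _ hinj, Finset.card_attach]
  · intro j hall u hu t ht
    simp only [Finset.coe_image, Set.mem_image, Finset.mem_coe, Finset.mem_attach,
      true_and] at hu ht
    obtain ⟨vu, rfl⟩ := hu
    obtain ⟨vt, rfl⟩ := ht
    rcases eq_or_ne j i with rfl | hj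
    · rw [Fin.insertNth_apply_same, Fin.insertNth_apply_same]
      have hu' : a vu ≠ ⊥ := by
        have := hall _ (Finset.mem_coe.2 (Finset.mem_image_of_mem _ (Finset.mem_attach _ vu)))
        rwa [Fin.insertNth_apply_same] at this
      have ht' : a vt ≠ ⊥ := by
        have := hall _ (Finset.mem_coe.2 (Finset.mem_image_of_mem _ (Finset.mem_attach _ vt)))
        rwa [Fin.insertNth_apply_same] at this
      rcases ha1 vu with h | h
      · exact absurd h hu'
      · rcases ha1 vt with h' | h'
        · exact absurd h' ht'
        · rw [h, h']
    · obtain ⟨j', rfl⟩ := Fin.exists_succAbove_eq hj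
      rw [Fin.insertNth_apply_succAbove, Fin.insertNth_apply_succAbove]
      have hnb : ∀ v ∈ (↑S : Set (Fin k → Bb)), v j' ≠ ⊥ := by
        intro v hv
        have := hall (i.insertNth (a ⟨v, hv⟩) v)
          (Finset.mem_coe.2 (Finset.mem_image_of_mem _ (Finset.mem_attach _ ⟨v, hv⟩)))
        rwa [Fin.insertNth_apply_succAbove] at this
      exact hcoh j' hnb vu.1 vu.2 vt.1 vt.2
  · rw [Finset.card_image_of_injective _ hinj, Finset.card_attach]
end

section
/- If a first-order monotone boolean function f of arity k satisfies cc(f) = ∞ (π₁(tr f) has no linearly coherent subset of cardinality ≥ 2), then f is M-sequential. -/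
instance : Fintype Bb := inferInstanceAs (Fintype (Option Bool))

section Aux

lemma tupLE_refl {k : ℕ} (x : Fin k → Bb) : tupLE x x := fun _ => bLE_refl _

/-- Every point where `f` is defined dominates a trace point. -/
lemma exists_trace_le {k : ℕ} (f : (Fin k → Bb) → Bb) :
    ∀ (x : Fin k → Bb), f x ≠ ⊥ → ∃ v ∈ traceDom f, tupLE v x := by
  classical
  suffices H : ∀ n (x : Fin k → Bb),
      (Finset.univ.filter (fun i => x i ≠ ⊥)).card ≤ n →
      f x ≠ ⊥ → ∃ v ∈ traceDom f, tupLE v x by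
    intro x hx; exact H _ x le_rfl hx
  intro n
  induction n with
  | zero =>
    intro x hcard hx
    refine ⟨x, ⟨hx, ?_⟩, tupLE_refl x⟩
    intro v' ⟨hle, hne⟩
    exfalso
    apply hne
    funext i
    have hxi : x i = ⊥ := by
      by_contra h
      have : i ∈ Finset.univ.filter (fun i => x i ≠ ⊥) := by simp [h]
      have : 0 < (Finset.univ.filter (fun i => x i ≠ ⊥)).card :=
        Finset.card_pos.mpr ⟨i, this⟩
      omega
    rcases hle i with h | h
    · rw [h, hxi]
    · exact h
  | succ n ih =>
    intro x hcard hx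
    by_cases hmin : ∀ v', tupLT v' x → f v' = ⊥
    · exact ⟨x, ⟨hx, hmin⟩, tupLE_refl x⟩
    · push_neg at hmin
      obtain ⟨v', ⟨hle, hne⟩, hv'⟩ := hmin
      have hss : (Finset.univ.filter (fun i => v' i ≠ ⊥)) ⊂
          (Finset.univ.filter (fun i => x i ≠ ⊥)) := by
        constructor
        · intro i hi
          simp only [Finset.mem_filter, Finset.mem_univ, true_and] at hi ⊢
          rcases hle i with h | h
          · exact absurd h hi
          · rw [← h]; exact hi
        · intro hsub
          apply hne
          funext i
          rcases hle i with h | h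
          · by_contra hne'
            have hxi : x i ≠ ⊥ := by
              intro hb; exact hne' (by rw [h, hb])
            have : i ∈ Finset.univ.filter (fun i => v' i ≠ ⊥) :=
              hsub (by simp [hxi])
            simp only [Finset.mem_filter, Finset.mem_univ, true_and] at this
            exact this h
          · exact h
      have hlt := Finset.card_lt_card hss
      obtain ⟨v, hv, hvle⟩ := ih v' (by omega) hv'
      exact ⟨v, hv, fun i => bLE_trans (hvle i) (hle i)⟩

/-- `cc f = ⊤` means there is no coherent subset of the trace of size ≥ 2. -/
lemma no_coherent {k : ℕ} (f : (Fin k → Bb) → Bb) (hc : cc f = ⊤) :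
    ∀ S : Finset (Fin k → Bb), ↑S ⊆ traceDom f → 2 ≤ S.card →
      ¬ LinCoherent (↑S : Set (Fin k → Bb)) := by
  intro S h1 h2 h3
  have := sInf_eq_top.mp hc ((S.card : ℕ∞)) ⟨S, h1, h2, h3, rfl⟩
  exact (WithTop.natCast_ne_top S.card) this

lemma tupLE_insertNth {k : ℕ} (i : Fin (k+1)) (c : Bb) {x y : Fin k → Bb}
    (h : tupLE x y) : tupLE (i.insertNth c x) (i.insertNth c y) := by
  intro j
  refine Fin.succAboveCases i ?_ ?_ j
  · simp only [Fin.insertNth_apply_same]; exact bLE_refl c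
  · intro l
    simp only [Fin.insertNth_apply_succAbove]
    exact h l

lemma insertNth_inj {k : ℕ} (i : Fin (k+1)) (c : Bb) :
    Function.Injective (fun y : Fin k → Bb => i.insertNth (α := fun _ => Bb) c y) := by
  intro a b hab
  funext l
  have := congrFun hab (i.succAbove l)
  simpa only [Fin.insertNth_apply_succAbove] using this

lemma insertNth_mem_traceDom {k : ℕ} (f : (Fin (k+1) → Bb) → Bb) (i : Fin (k+1))
    (c : Bool) (hbot : ∀ x, x i = ⊥ → f x = ⊥) {y : Fin k → Bb}
    (hy : y ∈ traceDom (fun z => f (i.insertNth (c : Bb) z))) :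
    i.insertNth (c : Bb) y ∈ traceDom f := by
  obtain ⟨hy1, hy2⟩ := hy
  refine ⟨hy1, ?_⟩
  rintro x' ⟨hle, hne⟩
  have hi := hle i
  rw [Fin.insertNth_apply_same] at hi
  rcases hi with h | h
  · exact hbot x' h
  · set y' : Fin k → Bb := fun l => x' (i.succAbove l) with hy'
    have hx' : x' = i.insertNth (c : Bb) y' := by
      funext j
      refine Fin.succAboveCases i ?_ ?_ j
      · rw [Fin.insertNth_apply_same]; exact h
      · intro l; rw [Fin.insertNth_apply_succAbove]
    have hlt : tupLT y' y := by
      constructor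
      · intro l
        have := hle (i.succAbove l)
        rwa [Fin.insertNth_apply_succAbove] at this
      · intro he
        exact hne (by rw [hx', he])
    have := hy2 y' hlt
    rw [hx']
    exact this

end Aux

/-- if `cc f = ∞` then `f` is M-sequential. -/
theorem stmt_15 {k : ℕ} (f : (Fin k → Bb) → Bb) (hf : FlatMono f)
    (hc : cc f = ⊤) : MSeq f := by
  classical
  induction k with
  | zero =>
    exact ⟨f (fun i => i.elim0), fun x => by
      congr 1; funext i; exact i.elim0⟩
  | succ k ih =>
    by_cases hseq : ∃ i : Fin (k+1), ∀ v ∈ traceDom f, v i ≠ ⊥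
    · obtain ⟨i, hi⟩ := hseq
      have hbot : ∀ x, x i = ⊥ → f x = ⊥ := by
        intro x hxi
        by_contra hfx
        obtain ⟨v, hv, hvle⟩ := exists_trace_le f x hfx
        rcases hvle i with h | h
        · exact hi v hv h
        · exact hi v hv (h.trans hxi)
      refine Or.inr ⟨i, hbot, fun c => ?_⟩
      apply ih
      · intro x y hxy
        exact hf _ _ (tupLE_insertNth i (c : Bb) hxy)
      · -- cc of the restriction is ⊤
        unfold cc
        rw [sInf_eq_top]
        rintro a ⟨S', hsub', hcard', hcoh', rfl⟩
        exfalso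
        set g := fun z : Fin k → Bb => f (i.insertNth (c : Bb) z) with hg
        set S : Finset (Fin (k+1) → Bb) := S'.image (fun y => i.insertNth (c : Bb) y)
          with hS
        have hcardS : S.card = S'.card :=
          Finset.card_image_of_injective S' (insertNth_inj i (c : Bb))
        refine no_coherent f hc S ?_ (by omega) ?_
        · intro v hv
          simp only [hS, Finset.coe_image, Set.mem_image, Finset.mem_coe] at hv
          obtain ⟨y, hyS, rfl⟩ := hv
          exact insertNth_mem_traceDom f i c hbot (hsub' hyS)
        · intro j hj v hv w hw
          simp only [hS, Finset.coe_image, Set.mem_image, Finset.mem_coe] at hv hw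
          obtain ⟨a, ha, rfl⟩ := hv
          obtain ⟨b, hb, rfl⟩ := hw
          by_cases hji : j = i
          · subst hji
            rw [Fin.insertNth_apply_same, Fin.insertNth_apply_same]
          · obtain ⟨l, rfl⟩ := Fin.exists_succAbove_eq hji
            rw [Fin.insertNth_apply_succAbove, Fin.insertNth_apply_succAbove]
            refine hcoh' l ?_ a ha b hb
            intro u hu
            have := hj (i.insertNth (c : Bb) u)
              (by simp only [hS, Finset.coe_image, Set.mem_image, Finset.mem_coe]
                  exact ⟨u, hu, rfl⟩)
            rwa [Fin.insertNth_apply_succAbove] at this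
    · push_neg at hseq
      -- every coordinate has a trace element that is ⊥ there: f is constant
      left
      set T : Finset (Fin (k+1) → Bb) :=
        Finset.univ.filter (fun v => v ∈ traceDom f) with hT
      have hTsub : ↑T ⊆ traceDom f := by
        intro v hv
        simp only [hT, Finset.coe_filter, Set.mem_setOf_eq] at hv
        exact hv.2
      have hTmem : ∀ v, v ∈ traceDom f → v ∈ T := by
        intro v hv; simp [hT, hv]
      have hTcoh : LinCoherent (↑T : Set (Fin (k+1) → Bb)) := by
        intro j hj
        obtain ⟨v, hv, hvj⟩ := hseq j
        exact absurd hvj (hj v (hTmem v hv))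
      have hcardT : T.card ≤ 1 := by
        by_contra h
        exact no_coherent f hc T hTsub (by omega) hTcoh
      obtain ⟨v0, hv0, hv0bot⟩ := hseq ⟨0, Nat.succ_pos k⟩
      have huniq := Finset.card_le_one.mp hcardT
      have hv0all : ∀ i, v0 i = ⊥ := by
        intro i
        obtain ⟨w, hw, hwi⟩ := hseq i
        have : w = v0 := huniq w (hTmem w hw) v0 (hTmem v0 hv0)
        rw [← this]; exact hwi
      refine ⟨f v0, fun x => ?_⟩
      have hle : tupLE v0 x := fun i => Or.inl (hv0all i)
      rcases hf v0 x hle with h | h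
      · exact absurd h hv0.1
      · exact h.symm
end
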